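/- For sufficiently large weight, the load-balancing LP minimizes the maximal load: consider the load-balancing LP with a single cluster containing all charger types and weight W > 0, and suppose at least one feasible assignment exists. Let ρ_min denote the minimum, over all feasible assignments λ, of the maximal load max_{j∈J} ∑_{i:(i,j)∈E} λ_{ij}/(N_j μ_{ij}). Then there exists W₀ ≥ 0 such that for every W > W₀, every optimal solution (λ*, ρ*) of the load-balancing LP satisfies ρ* = ρ_min. -/

import Mathlib

open Finset

/-- A feasible assignment for the stability LP. -/
def FeasibleAssignment {I J : Type*} [Fintype I] [Fintype J]
    (E : Finset (I × J)) (lam : I → ℝ) (N : J → ℝ) (mu : I × J → ℝ)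
    (x : I × J → ℝ) : Prop :=
  (∀ p ∈ E, 0 ≤ x p) ∧ (∀ p ∉ E, x p = 0) ∧
  (∀ i, ∑ j : J, x (i, j) = lam i) ∧
  (∀ j, ∑ i : I, x (i, j) / mu (i, j) ≤ N j)

/-- The load `∑_{i:(i,j)∈E} λ_{ij}/(N_j μ_{ij})` of charger type `j` under assignment `x`
(for `x` supported on `E`). -/
noncomputable def chargerLoad {I J : Type*} [Fintype I]
    (N : J → ℝ) (mu : I × J → ℝ) (x : I × J → ℝ) (j : J) : ℝ :=
  ∑ i : I, x (i, j) / (N j * mu (i, j))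

/-- The maximal load `max_{j ∈ J} ∑_{i:(i,j)∈E} λ_{ij}/(N_j μ_{ij})` of an assignment. -/
noncomputable def maxLoad {I J : Type*} [Fintype I] [Fintype J] [Nonempty J]
    (N : J → ℝ) (mu : I × J → ℝ) (x : I × J → ℝ) : ℝ :=
  Finset.univ.sup' Finset.univ_nonempty (chargerLoad N mu x)

theorem extremePoints_finite_of_linear_system' {M : Type*} [AddCommGroup M] [Module ℝ M]
    {K : Type*} [Fintype K] (f : K → M → ℝ) (hf : ∀ k, IsLinearMap ℝ (f k)) (b : K → ℝ) :
    ({x : M | ∀ k, f k x ≤ b k}.extremePoints ℝ).Finite := by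
  classical
  set s : Set M := {x | ∀ k, f k x ≤ b k} with hs
  have key : Set.InjOn (fun x => {k | f k x = b k}) (s.extremePoints ℝ) := by
    intro x hx y hy hxy
    by_contra hne
    set A : Finset K := Finset.univ.filter (fun k => f k x ≠ b k) with hA
    set cfun : K → ℝ := fun k => (b k - f k x) / (1 + |f k x - f k y|) with hcfun
    set T : Finset ℝ := insert (1:ℝ) (A.image cfun) with hT
    have hTne : T.Nonempty := ⟨1, by simp [hT]⟩
    set ε : ℝ := T.min' hTne with hε
    have hx' := (mem_extremePoints.1 hx)
    have hy' := (mem_extremePoints.1 hy)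
    have hεpos : 0 < ε := by
      rw [hε, Finset.lt_min'_iff]
      intro a ha
      rw [hT, Finset.mem_insert] at ha
      rcases ha with rfl | ha
      · norm_num
      · obtain ⟨k, hk, rfl⟩ := Finset.mem_image.1 ha
        rw [hA, Finset.mem_filter] at hk
        have h1 : f k x < b k := lt_of_le_of_ne (hx'.1 k) hk.2
        have h2 : (0:ℝ) < 1 + |f k x - f k y| := by positivity
        exact div_pos (by linarith) h2
    have hεle : ∀ k, f k x < b k → ε ≤ cfun k := by
      intro k hk
      apply Finset.min'_le
      rw [hT, Finset.mem_insert]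
      right
      exact Finset.mem_image.2 ⟨k, by simp [hA, ne_of_lt hk], rfl⟩
    have hlinc : ∀ k, f k (x + ε • (x - y)) = f k x + ε * (f k x - f k y) := by
      intro k
      rw [(hf k).map_add, (hf k).map_smul, (hf k).map_sub, smul_eq_mul]
    set z : M := x + ε • (x - y) with hz
    have hzs : z ∈ s := by
      intro k
      rw [hlinc k]
      by_cases hk : f k x = b k
      · have hky : f k y = b k := by
          have hmem : k ∈ (fun x => {k | f k x = b k}) x := hk
          rw [hxy] at hmem
          exact hmem
        rw [hk, hky]
        simp
      · have h1 : f k x < b k := lt_of_le_of_ne (hx'.1 k) hk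
        have h2 : (0:ℝ) < 1 + |f k x - f k y| := by positivity
        have h3 : ε * (1 + |f k x - f k y|) ≤ b k - f k x := by
          have := hεle k h1
          calc ε * (1 + |f k x - f k y|) ≤ cfun k * (1 + |f k x - f k y|) := by
                exact mul_le_mul_of_nonneg_right this (le_of_lt h2)
            _ = b k - f k x := by rw [hcfun]; field_simp
        have h4 : f k x - f k y ≤ |f k x - f k y| := le_abs_self _
        nlinarith [abs_nonneg (f k x - f k y)]
    have hseg : x ∈ openSegment ℝ z y := by
      refine ⟨(1+ε)⁻¹, ε/(1+ε), by positivity, by positivity, ?_, ?_⟩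
      · field_simp
      · rw [hz]
        match_scalars <;> field_simp <;> ring
    have := (hx'.2 z hzs y hy'.1 hseg).2
    exact hne this.symm
  exact Set.Finite.of_finite_image (Set.toFinite _) key

theorem compact_convex_eq_convexHull_extremePoints' {M : Type*} [NormedAddCommGroup M]
    [NormedSpace ℝ M] {s : Set M} (hcomp : IsCompact s) (hconv : Convex ℝ s)
    (hfin : (s.extremePoints ℝ).Finite) :
    s = convexHull ℝ (s.extremePoints ℝ) := by
  conv_lhs => rw [← closure_convexHull_extremePoints hcomp hconv]
  exact (hfin.isCompact_convexHull ℝ).isClosed.closure_eq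

/-- **For sufficiently large weight, the load-balancing LP minimizes the maximal load.**
Consider the load-balancing LP with a single cluster containing all charger types and
weight `W > 0`: minimize `∑_{(i,j)∈E} λ_{ij} c_{ij} + W ρ` over feasible assignments `λ`
and reals `ρ` with `ρ ≥ load_j(λ)` for every `j`. If at least one feasible assignment
exists and `ρ_min` is the infimum over feasible assignments of the maximal load, then
there is a `W₀ ≥ 0` such that for every `W > W₀`, every optimal solution `(λ*, ρ*)`
satisfies `ρ* = ρ_min`. -/
theorem load_balancing_lp_minimizes_max_load
    {I J : Type*} [Fintype I] [Fintype J] [Nonempty I] [Nonempty J]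
    [DecidableEq I] [DecidableEq J]
    (E : Finset (I × J))
    (hE : ∀ i : I, ∃ j : J, (i, j) ∈ E)
    (lam : I → ℝ) (hlam : ∀ i, 0 < lam i)
    (N : J → ℝ) (hN : ∀ j, 0 < N j)
    (mu : I × J → ℝ) (hmu : ∀ p ∈ E, 0 < mu p)
    (c : I × J → ℝ) (hc : ∀ p ∈ E, 0 ≤ c p)
    (hfeas : ∃ x : I × J → ℝ, FeasibleAssignment E lam N mu x) :
    ∃ W₀ : ℝ, 0 ≤ W₀ ∧ ∀ W : ℝ, W₀ < W →
      ∀ (xstar : I × J → ℝ) (rhostar : ℝ),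
        (FeasibleAssignment E lam N mu xstar ∧
          ∀ j : J, chargerLoad N mu xstar j ≤ rhostar) →
        (∀ (x : I × J → ℝ) (rho : ℝ),
          (FeasibleAssignment E lam N mu x ∧ ∀ j : J, chargerLoad N mu x j ≤ rho) →
          (∑ p ∈ E, xstar p * c p) + W * rhostar ≤ (∑ p ∈ E, x p * c p) + W * rho) →
        rhostar = sInf (maxLoad N mu '' {x | FeasibleAssignment E lam N mu x}) := by
  classical
  obtain ⟨xh, hxh⟩ := hfeas
  -- basic facts about feasible assignments
  have fact1 : ∀ x, FeasibleAssignment E lam N mu x → ∀ p, 0 ≤ x p := by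
    intro x hx p
    by_cases hp : p ∈ E
    · exact hx.1 p hp
    · rw [hx.2.1 p hp]
  have fact2 : ∀ x, FeasibleAssignment E lam N mu x → ∀ p, x p ≤ lam p.1 := by
    intro x hx p
    have h := Finset.single_le_sum (f := fun j => x (p.1, j))
      (fun j _ => fact1 x hx (p.1, j)) (Finset.mem_univ p.2)
    rw [hx.2.2.1 p.1] at h
    simpa using h
  have hEne : E.Nonempty := by
    obtain ⟨j, hj⟩ := hE (Classical.arbitrary I)
    exact ⟨_, hj⟩
  set D : ℝ := (E.image (fun p => N p.2 * mu p)).min' (hEne.image _) with hDdef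
  have hDpos : 0 < D := by
    have hmem := Finset.min'_mem (E.image (fun p => N p.2 * mu p)) (hEne.image _)
    rw [Finset.mem_image] at hmem
    obtain ⟨p, hp, hpe⟩ := hmem
    rw [hDdef, ← hpe]
    exact mul_pos (hN p.2) (hmu p hp)
  have hDle : ∀ p ∈ E, D ≤ N p.2 * mu p := fun p hp =>
    Finset.min'_le _ _ (Finset.mem_image_of_mem _ hp)
  set B : ℝ := (∑ i, lam i) / D with hBdef
  set R : ℝ := B + 1 with hRdef
  have fact3 : ∀ x, FeasibleAssignment E lam N mu x → ∀ j, 0 ≤ chargerLoad N mu x j := by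
    intro x hx j
    apply Finset.sum_nonneg
    intro i _
    by_cases hp : (i, j) ∈ E
    · exact div_nonneg (hx.1 _ hp) (le_of_lt (mul_pos (hN j) (hmu _ hp)))
    · rw [hx.2.1 _ hp, zero_div]
  have fact4 : ∀ x, FeasibleAssignment E lam N mu x → ∀ j, chargerLoad N mu x j ≤ B := by
    intro x hx j
    rw [hBdef, Finset.sum_div]
    apply Finset.sum_le_sum
    intro i _
    by_cases hp : (i, j) ∈ E
    · exact div_le_div₀ (le_of_lt (hlam i)) (fact2 x hx (i, j)) hDpos (hDle _ hp)
    · rw [hx.2.1 _ hp, zero_div]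
      exact div_nonneg (hlam i).le hDpos.le
  have hB0 : 0 ≤ B := le_trans (fact3 xh hxh (Classical.arbitrary J)) (fact4 xh hxh _)
  -- the cost functional
  set cost : ((I × J) → ℝ) → ℝ := fun x => ∑ p ∈ E, x p * c p with hcostdef
  set Csup : ℝ := ∑ p ∈ E, lam p.1 * c p with hCsupdef
  have fact5 : ∀ x, FeasibleAssignment E lam N mu x → 0 ≤ cost x ∧ cost x ≤ Csup := by
    intro x hx
    constructor
    · exact Finset.sum_nonneg fun p hp => mul_nonneg (hx.1 p hp) (hc p hp)
    · exact Finset.sum_le_sum fun p hp =>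
        mul_le_mul_of_nonneg_right (fact2 x hx p) (hc p hp)
  have hCsup0 : 0 ≤ Csup := le_trans (fact5 xh hxh).1 (fact5 xh hxh).2
  -- the truncated feasible region in (x, ρ) space
  set S : Set (((I × J) → ℝ) × ℝ) := {v | FeasibleAssignment E lam N mu v.1 ∧
    (∀ j, chargerLoad N mu v.1 j ≤ v.2) ∧ v.2 ≤ R} with hSdef
  -- linear description of S
  set K : Type _ := (I × J) ⊕ ((I × J) ⊕ (I ⊕ (I ⊕ (J ⊕ (J ⊕ Unit))))) with hKdef
  set f : K → (((I × J) → ℝ) × ℝ) → ℝ :=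
    Sum.elim (fun p v => -(v.1 p))
      (Sum.elim (fun p v => v.1 p)
        (Sum.elim (fun i v => ∑ j, v.1 (i, j))
          (Sum.elim (fun i v => -(∑ j, v.1 (i, j)))
            (Sum.elim (fun j v => ∑ i, v.1 (i, j) / mu (i, j))
              (Sum.elim (fun j v => (∑ i, v.1 (i, j) / (N j * mu (i, j))) - v.2)
                (fun _ v => v.2)))))) with hfdef
  set b : K → ℝ :=
    Sum.elim (fun _ => 0)
      (Sum.elim (fun p => if p ∈ E then lam p.1 else 0)
        (Sum.elim (fun i => lam i)
          (Sum.elim (fun i => -(lam i))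
            (Sum.elim (fun j => N j)
              (Sum.elim (fun _ => 0)
                (fun _ => R)))))) with hbdef
  have hfst : ∀ (u w : ((I × J) → ℝ) × ℝ) (p : I × J), (u + w).1 p = u.1 p + w.1 p :=
    fun _ _ _ => rfl
  have hfsts : ∀ (a : ℝ) (u : ((I × J) → ℝ) × ℝ) (p : I × J), (a • u).1 p = a * u.1 p :=
    fun _ _ _ => rfl
  have hsnd : ∀ (u w : ((I × J) → ℝ) × ℝ), (u + w).2 = u.2 + w.2 := fun _ _ => rfl
  have hsnds : ∀ (a : ℝ) (u : ((I × J) → ℝ) × ℝ), (a • u).2 = a * u.2 := fun _ _ => rfl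
  have hflin : ∀ k, IsLinearMap ℝ (f k) := by
    rintro (p | p | i | i | j | j | u) <;> constructor <;> intro a b' <;>
      simp only [hfdef, Sum.elim_inl, Sum.elim_inr, hfst, hfsts, hsnd, hsnds, add_div,
        Finset.sum_add_distrib, mul_div_assoc, ← Finset.mul_sum, smul_eq_mul] <;>
      try ring
  have hSeq : S = {v | ∀ k, f k v ≤ b k} := by
    ext v
    constructor
    · rintro ⟨hvf, hvload, hvR⟩
      rintro (p | p | i | i | j | j | u) <;>
        simp only [hfdef, hbdef, Sum.elim_inl, Sum.elim_inr]
      · simpa using fact1 v.1 hvf p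
      · by_cases hp : p ∈ E
        · simpa [hp] using fact2 v.1 hvf p
        · simp [hp, hvf.2.1 p hp]
      · simpa using le_of_eq (hvf.2.2.1 i)
      · simpa using ge_of_eq (hvf.2.2.1 i)
      · simpa using hvf.2.2.2 j
      · simpa [sub_nonpos, chargerLoad] using hvload j
      · simpa using hvR
    · intro hv
      have h1 : ∀ p, 0 ≤ v.1 p := by
        intro p
        have := hv (Sum.inl p)
        simp only [hfdef, hbdef, Sum.elim_inl, Sum.elim_inr] at this
        linarith
      have h2 : ∀ p ∉ E, v.1 p = 0 := by
        intro p hp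
        have := hv (Sum.inr (Sum.inl p))
        simp only [hfdef, hbdef, Sum.elim_inl, Sum.elim_inr, if_neg hp] at this
        exact le_antisymm this (h1 p)
      have h3 : ∀ i, ∑ j, v.1 (i, j) = lam i := by
        intro i
        have ha := hv (Sum.inr (Sum.inr (Sum.inl i)))
        have hb := hv (Sum.inr (Sum.inr (Sum.inr (Sum.inl i))))
        simp only [hfdef, hbdef, Sum.elim_inl, Sum.elim_inr] at ha hb
        linarith
      refine ⟨⟨fun p _ => h1 p, h2, h3, fun j => by
        have := hv (Sum.inr (Sum.inr (Sum.inr (Sum.inr (Sum.inl j)))))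
        simpa only [hfdef, hbdef, Sum.elim_inl, Sum.elim_inr] using this⟩, ?_, ?_⟩
      · intro j
        have := hv (Sum.inr (Sum.inr (Sum.inr (Sum.inr (Sum.inr (Sum.inl j))))))
        simp only [hfdef, hbdef, Sum.elim_inl, Sum.elim_inr] at this
        rw [chargerLoad]
        linarith
      · have := hv (Sum.inr (Sum.inr (Sum.inr (Sum.inr (Sum.inr (Sum.inr ()))))))
        simpa only [hfdef, hbdef, Sum.elim_inl, Sum.elim_inr] using this
  -- S is compact and convex with finitely many extreme points
  have hSconv : Convex ℝ S := by
    rw [hSeq, Set.setOf_forall]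
    exact convex_iInter fun k => convex_halfSpace_le (hflin k) (b k)
  have hSclosed : IsClosed S := by
    rw [hSeq, Set.setOf_forall]
    exact isClosed_iInter fun k => isClosed_le
      (IsLinearMap.mk' (f k) (hflin k)).continuous_of_finiteDimensional continuous_const
  have hScomp : IsCompact S := by
    have hbox : IsCompact ((Set.univ.pi fun p : I × J => Set.Icc (0:ℝ) (lam p.1)) ×ˢ
        Set.Icc (0:ℝ) R) :=
      (isCompact_univ_pi fun p => isCompact_Icc).prod isCompact_Icc
    apply hbox.of_isClosed_subset hSclosed
    rintro v ⟨hvf, hvload, hvR⟩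
    constructor
    · intro p _
      exact ⟨fact1 v.1 hvf p, fact2 v.1 hvf p⟩
    · exact ⟨le_trans (fact3 v.1 hvf (Classical.arbitrary J)) (hvload _), hvR⟩
  have hSfin : (S.extremePoints ℝ).Finite := by
    rw [hSeq]
    exact extremePoints_finite_of_linear_system' f hflin b
  have hShull : S = convexHull ℝ (S.extremePoints ℝ) :=
    compact_convex_eq_convexHull_extremePoints' hScomp hSconv hSfin
  set Vfin : Finset (((I × J) → ℝ) × ℝ) := hSfin.toFinset with hVfindef
  have hShull' : S = convexHull ℝ (Vfin : Set _) := by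
    rw [hShull, hVfindef, Set.Finite.coe_toFinset]
  have hVfinS : ∀ v ∈ Vfin, v ∈ S := by
    intro v hv
    rw [hVfindef, Set.Finite.mem_toFinset] at hv
    exact extremePoints_subset hv
  -- minimum of ρ over S
  have hSne : Set.Nonempty S := ⟨(xh, R), hxh, fun j => le_trans (fact4 xh hxh j) (by
    rw [hRdef]; linarith), le_refl R⟩
  obtain ⟨v₀, hv₀S, hv₀min'⟩ := hScomp.exists_isMinOn hSne continuous_snd.continuousOn
  have hv₀min : ∀ v ∈ S, v₀.2 ≤ v.2 := fun v hv => hv₀min' hv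
  set rstar : ℝ := v₀.2 with hrstardef
  -- relating to maxLoad and the sInf
  have claimA : ∀ x, FeasibleAssignment E lam N mu x → (x, maxLoad N mu x) ∈ S := by
    intro x hx
    refine ⟨hx, fun j => Finset.le_sup' _ (Finset.mem_univ j), ?_⟩
    rw [hRdef]
    have : maxLoad N mu x ≤ B := Finset.sup'_le _ _ fun j _ => fact4 x hx j
    linarith
  have claimB : ∀ x, FeasibleAssignment E lam N mu x → rstar ≤ maxLoad N mu x :=
    fun x hx => hv₀min _ (claimA x hx)
  have claimC : maxLoad N mu v₀.1 ≤ rstar :=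
    Finset.sup'_le _ _ fun j _ => hv₀S.2.1 j
  have hrstarB : rstar ≤ B := le_trans (claimB xh hxh)
    (Finset.sup'_le _ _ fun j _ => fact4 xh hxh j)
  have hsInf : sInf (maxLoad N mu '' {x | FeasibleAssignment E lam N mu x}) = rstar := by
    have hbdd : BddBelow (maxLoad N mu '' {x | FeasibleAssignment E lam N mu x}) := by
      refine ⟨rstar, ?_⟩
      rintro a ⟨x, hx, rfl⟩
      exact claimB x hx
    apply le_antisymm
    · exact csInf_le hbdd ⟨v₀.1, hv₀S.1, le_antisymm claimC (claimB v₀.1 hv₀S.1)⟩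
    · refine le_csInf ⟨_, ⟨xh, hxh, rfl⟩⟩ ?_
      rintro a ⟨x, hx, rfl⟩
      exact claimB x hx
  -- the vertex gap ε
  set gapS : Finset (((I × J) → ℝ) × ℝ) := Vfin.filter (fun v => rstar < v.2) with hgapdef
  set T : Finset ℝ := insert (1:ℝ) (gapS.image (fun v => v.2 - rstar)) with hTdef
  have hTne : T.Nonempty := ⟨1, by simp [hTdef]⟩
  set ε : ℝ := T.min' hTne with hεdef
  have hεpos : 0 < ε := by
    rw [hεdef, Finset.lt_min'_iff]
    intro a ha
    rw [hTdef, Finset.mem_insert] at ha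
    rcases ha with rfl | ha
    · norm_num
    · obtain ⟨v, hv, rfl⟩ := Finset.mem_image.1 ha
      rw [hgapdef, Finset.mem_filter] at hv
      linarith [hv.2]
  have hε1 : ε ≤ 1 := Finset.min'_le _ _ (Finset.mem_insert_self _ _)
  have hεgap : ∀ v ∈ Vfin, rstar < v.2 → ε ≤ v.2 - rstar := by
    intro v hv hlt
    apply Finset.min'_le
    rw [hTdef, Finset.mem_insert]
    exact Or.inr (Finset.mem_image.2 ⟨v, by rw [hgapdef, Finset.mem_filter]; exact ⟨hv, hlt⟩, rfl⟩)
  -- choose W₀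
  refine ⟨(Csup + 1) / ε, div_nonneg (by linarith) hεpos.le, ?_⟩
  intro W hW xstar rhostar ⟨hfeass, hloads⟩ hopt
  have hWpos : 0 < W := lt_of_le_of_lt (div_nonneg (by linarith) hεpos.le) hW
  have hWε : Csup + 1 < W * ε := by
    rw [div_lt_iff₀ hεpos] at hW
    linarith
  -- comparison with the min-load point
  have key : cost xstar + W * rhostar ≤ cost v₀.1 + W * rstar :=
    hopt v₀.1 rstar ⟨hv₀S.1, hv₀S.2.1⟩
  have hrsle : rstar ≤ rhostar :=
    le_trans (claimB xstar hfeass) (Finset.sup'_le _ _ fun j _ => hloads j)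
  have hgap : rhostar - rstar < ε := by
    have h1 : 0 ≤ cost xstar := (fact5 xstar hfeass).1
    have h2 : cost v₀.1 ≤ Csup := (fact5 v₀.1 hv₀S.1).2
    have h6 : W * (rhostar - rstar) = W * rhostar - W * rstar := by ring
    have h3 : W * (rhostar - rstar) ≤ Csup := by linarith
    by_contra hcon
    push_neg at hcon
    have h5 := mul_le_mul_of_nonneg_left hcon hWpos.le
    linarith
  have hvstarS : (xstar, rhostar) ∈ S := by
    refine ⟨hfeass, hloads, ?_⟩
    rw [hRdef]
    linarith
  -- (xstar, rhostar) minimizes the LP objective over S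
  set F : (((I × J) → ℝ) × ℝ) → ℝ := fun v => cost v.1 + W * v.2 with hFdef
  have hminS : ∀ v ∈ S, F (xstar, rhostar) ≤ F v := by
    intro v hv
    exact hopt v.1 v.2 ⟨hv.1, hv.2.1⟩
  have hFlin : IsLinearMap ℝ F := by
    constructor <;> intro a b' <;>
      simp only [hFdef, hcostdef, hfst, hfsts, hsnd, hsnds, add_mul, Finset.sum_add_distrib,
        smul_eq_mul, mul_assoc, ← Finset.mul_sum] <;> ring
  -- convex combination representation
  have hmem : (xstar, rhostar) ∈ convexHull ℝ (Vfin : Set _) := by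
    rw [← hShull']
    exact hvstarS
  rw [Finset.convexHull_eq] at hmem
  obtain ⟨w, hw0, hw1, hwc⟩ := hmem
  rw [Finset.centerMass_eq_of_sum_1 _ id hw1] at hwc
  simp only [id_eq] at hwc
  -- F value decomposition
  set Fl : (((I × J) → ℝ) × ℝ) →ₗ[ℝ] ℝ := IsLinearMap.mk' F hFlin with hFldef
  have hFval : F (xstar, rhostar) = ∑ v ∈ Vfin, w v * F v := by
    have := congrArg Fl hwc
    rw [map_sum] at this
    simp only [map_smul, smul_eq_mul] at this
    exact this.symm
  have hFge : ∀ v ∈ Vfin, F (xstar, rhostar) ≤ F v := fun v hv => hminS v (hVfinS v hv)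
  have hzero : ∀ v ∈ Vfin, w v * (F v - F (xstar, rhostar)) = 0 := by
    have hsum : ∑ v ∈ Vfin, w v * (F v - F (xstar, rhostar)) = 0 := by
      simp only [mul_sub]
      rw [Finset.sum_sub_distrib, ← Finset.sum_mul, hw1, one_mul, ← hFval, sub_self]
    exact (Finset.sum_eq_zero_iff_of_nonneg fun v hv =>
      mul_nonneg (hw0 v hv) (sub_nonneg.2 (hFge v hv))).1 hsum
  -- each vertex in the support has ρ-coordinate rstar
  have hvert : ∀ v ∈ Vfin, w v ≠ 0 → v.2 = rstar := by
    intro v hv hwv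
    have hFv : F v = F (xstar, rhostar) := by
      have := hzero v hv
      rcases mul_eq_zero.1 this with h | h
      · exact absurd h hwv
      · linarith [sub_eq_zero.1 h]
    by_contra hne
    have hvS := hVfinS v hv
    have hge : rstar ≤ v.2 := hv₀min v hvS
    have hlt : rstar < v.2 := lt_of_le_of_ne hge (Ne.symm hne)
    have hεv := hεgap v hv hlt
    have h1 : 0 ≤ cost v.1 := (fact5 v.1 hvS.1).1
    have h2 : cost v₀.1 ≤ Csup := (fact5 v₀.1 hv₀S.1).2
    -- F v = F(xstar,rhostar) ≤ cost v₀.1 + W rstar ≤ Csup + W rstar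
    have h3 : F v ≤ Csup + W * rstar := by
      rw [hFv]
      calc F (xstar, rhostar) ≤ cost v₀.1 + W * rstar := key
        _ ≤ Csup + W * rstar := by linarith
    have h4 : cost v.1 + W * v.2 ≤ Csup + W * rstar := h3
    have h5 := mul_le_mul_of_nonneg_left hεv hWpos.le
    have h6 : W * (v.2 - rstar) = W * v.2 - W * rstar := by ring
    linarith
  -- conclude
  have hrho : rhostar = rstar := by
    have hsnd2 : rhostar = ∑ v ∈ Vfin, w v * v.2 := by
      have h := congrArg (LinearMap.snd ℝ ((I × J) → ℝ) ℝ) hwc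
      rw [map_sum] at h
      simp only [map_smul, smul_eq_mul, LinearMap.snd_apply] at h
      exact h.symm
    rw [hsnd2]
    have : ∑ v ∈ Vfin, w v * v.2 = ∑ v ∈ Vfin, w v * rstar := by
      apply Finset.sum_congr rfl
      intro v hv
      by_cases hwv : w v = 0
      · rw [hwv, zero_mul, zero_mul]
      · rw [hvert v hv hwv]
    rw [this, ← Finset.sum_mul, hw1, one_mul]
  rw [hrho, hsInf]
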